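/- arXiv:2302.10371 — 3 statements merged into one kernel-verified Lean document; each statement's English description precedes it below -/
import Mathlib

section
/- Let λ > 0 and let x₁,…,x_K ∈ ℝ^d satisfy ‖x_k‖₂ ≤ L for all k. Define Z_k = λI + ∑_{i=1}^{k-1} x_i x_iᵀ. Then ∑_{k=1}^K min{1, ‖x_k‖²_{Z_k^{-1}}} ≤ 2d log(1 + K L²/(dλ)). -/
open Matrix

-- outer product is posSemidef
lemma aux_vecMulVec_posSemidef {d : ℕ} (v : Fin d → ℝ) :
    (vecMulVec v v).PosSemidef := by
  apply PosSemidef.of_dotProduct_mulVec_nonneg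
  · ext i j; simp [vecMulVec, conjTranspose_apply, mul_comm]
  · intro y
    have h : vecMulVec v v *ᵥ y = (v ⬝ᵥ y) • v := by
      ext i; simp [vecMulVec, mulVec, dotProduct, Finset.sum_mul, Finset.mul_sum, mul_assoc]; exact Finset.sum_congr rfl fun j _ => by ring
    rw [h]
    simp only [star_trivial, dotProduct_smul, smul_eq_mul]
    rw [show y ⬝ᵥ v = v ⬝ᵥ y from dotProduct_comm y v]
    exact mul_self_nonneg _

-- lam • 1 is posdef
lemma aux_smul_one_posDef {d : ℕ} {lam : ℝ} (h : 0 < lam) :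
    (lam • (1 : Matrix (Fin d) (Fin d) ℝ)).PosDef := by
  rw [smul_one_eq_diagonal]
  rw [posDef_diagonal_iff]
  intro i; exact h

-- matrix determinant lemma specialized
lemma aux_det_add_outer {d : ℕ} {A : Matrix (Fin d) (Fin d) ℝ} (hA : A.PosDef) (v : Fin d → ℝ) :
    (A + vecMulVec v v).det = A.det * (1 + v ⬝ᵥ A⁻¹ *ᵥ v) := by
  rw [vecMulVec_eq Unit, det_add_replicateCol_mul_replicateRow hA.det_pos.ne'.isUnit]
  congr 1
  rw [det_unique, Matrix.add_apply, one_apply_eq, Matrix.mul_assoc, ← replicateCol_mulVec,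
    replicateRow_mul_replicateCol_apply]

lemma aux_min_le_log {u : ℝ} (hu : 0 ≤ u) : min 1 u ≤ 2 * Real.log (1 + u) := by
  have h1u : (0:ℝ) < 1 + u := by linarith
  have hlow : 1 - (1 + u)⁻¹ ≤ Real.log (1 + u) := by
    have := Real.log_le_sub_one_of_pos (x := (1 + u)⁻¹) (by positivity)
    rw [Real.log_inv] at this
    linarith
  rcases le_total u 1 with h | h
  · have : min 1 u = u := min_eq_right h
    rw [this]
    have hinv : (1 + u) * (1 + u)⁻¹ = 1 := mul_inv_cancel₀ h1u.ne'
    have hinvpos : 0 < (1 + u)⁻¹ := by positivity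
    have : u / 2 ≤ 1 - (1 + u)⁻¹ := by nlinarith [sq_nonneg (1 - u)]
    linarith
  · have : min 1 u = 1 := min_eq_left h
    rw [this]
    have h2 : Real.log 2 ≤ Real.log (1 + u) := Real.log_le_log (by norm_num) (by linarith)
    have he : Real.exp (1/2) < 2 := by
      have h2 : Real.exp (1/2) ^ 2 = Real.exp 1 := by
        rw [sq, ← Real.exp_add]; norm_num
      nlinarith [Real.exp_pos (1/2 : ℝ), Real.exp_one_lt_d9]
    have : (1:ℝ)/2 < Real.log 2 := by
      rw [Real.lt_log_iff_exp_lt (by norm_num)]; exact he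
    linarith

lemma aux_trace_eq_sum_eigenvalues {d : ℕ} {A : Matrix (Fin d) (Fin d) ℝ}
    (hA : A.IsHermitian) : A.trace = ∑ i, hA.eigenvalues i := by
  rw [hA.trace_eq_sum_eigenvalues]
  simp

lemma aux_det_le_trace_pow {d : ℕ} (hd : 0 < d) {A : Matrix (Fin d) (Fin d) ℝ}
    (hA : A.PosSemidef) : A.det ≤ (A.trace / d) ^ d := by
  have hev := hA.eigenvalues_nonneg
  have hdet : A.det = ∏ i, hA.1.eigenvalues i := by
    rw [hA.1.det_eq_prod_eigenvalues]; norm_num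
  have htr : A.trace = ∑ i, hA.1.eigenvalues i := aux_trace_eq_sum_eigenvalues hA.1
  rw [hdet, htr]
  have hamgm := Real.geom_mean_le_arith_mean_weighted Finset.univ
    (fun _ : Fin d => (d : ℝ)⁻¹) (fun i => hA.1.eigenvalues i)
    (fun i _ => by positivity)
    (by simp [Finset.card_univ]; field_simp)
    (fun i _ => hev i)
  -- ∏ λᵢ^(1/d) ≤ ∑ (1/d) λᵢ
  have key : (∏ i, hA.1.eigenvalues i) = (∏ i, (hA.1.eigenvalues i) ^ ((d:ℝ)⁻¹)) ^ (d:ℕ) := by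
    rw [← Finset.prod_pow]
    refine Finset.prod_congr rfl fun i _ => ?_
    rw [← Real.rpow_natCast ((hA.1.eigenvalues i) ^ ((d:ℝ)⁻¹)) d, ← Real.rpow_mul (hev i)]
    rw [inv_mul_cancel₀ (by positivity : (d:ℝ) ≠ 0), Real.rpow_one]
  rw [key]
  have h1 : (0:ℝ) ≤ ∏ i, (hA.1.eigenvalues i) ^ ((d:ℝ)⁻¹) :=
    Finset.prod_nonneg fun i _ => Real.rpow_nonneg (hev i) _
  calc (∏ i, (hA.1.eigenvalues i) ^ ((d:ℝ)⁻¹)) ^ (d:ℕ)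
      ≤ (∑ i, (d:ℝ)⁻¹ * hA.1.eigenvalues i) ^ (d:ℕ) := by
        exact pow_le_pow_left₀ h1 hamgm d
    _ = ((∑ i, hA.1.eigenvalues i) / d) ^ (d:ℕ) := by
        rw [← Finset.mul_sum]; ring_nf

theorem stmt_3 (d K : ℕ) (hd : 0 < d) (lam L : ℝ) (hlam : 0 < lam) (hL : 0 < L)
    (x : Fin K → Fin d → ℝ) (hx : ∀ k, Real.sqrt (x k ⬝ᵥ x k) ≤ L)
    (Z : Fin K → Matrix (Fin d) (Fin d) ℝ)
    (hZ : ∀ k, Z k = lam • (1 : Matrix (Fin d) (Fin d) ℝ) +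
      ∑ i ∈ Finset.univ.filter (fun i => i < k), vecMulVec (x i) (x i)) :
    ∑ k, min 1 (x k ⬝ᵥ (Z k)⁻¹.mulVec (x k)) ≤
      2 * d * Real.log (1 + K * L ^ 2 / (d * lam)) := by
  classical
  set W : ℕ → Matrix (Fin d) (Fin d) ℝ := fun n =>
    lam • (1 : Matrix (Fin d) (Fin d) ℝ) +
      ∑ i ∈ Finset.univ.filter (fun i : Fin K => (i : ℕ) < n), vecMulVec (x i) (x i) with hW
  -- each W n is positive definite
  have hWpos : ∀ n, (W n).PosDef := by
    intro n
    refine (aux_smul_one_posDef hlam).add_posSemidef ?_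
    refine Finset.sum_induction _ _ (fun a b ha hb => ha.add hb) .zero ?_
    exact fun i _ => aux_vecMulVec_posSemidef (x i)
  -- Z k = W k
  have hZW : ∀ k : Fin K, Z k = W (k : ℕ) := by
    intro k
    rw [hZ, hW]
    congr 2
  -- abbreviation for the quadratic forms
  set u : Fin K → ℝ := fun k => x k ⬝ᵥ (W (k : ℕ))⁻¹ *ᵥ x k with hu
  have hu0 : ∀ k, 0 ≤ u k := by
    intro k
    have h := ((hWpos (k : ℕ)).inv).posSemidef.dotProduct_mulVec_nonneg (x k)
    simpa using h
  -- successor formula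
  have hWsucc : ∀ k : Fin K, W ((k : ℕ) + 1) = W (k : ℕ) + vecMulVec (x k) (x k) := by
    intro k
    simp only [hW]
    have hfilter : Finset.univ.filter (fun i : Fin K => (i : ℕ) < (k : ℕ) + 1)
        = insert k (Finset.univ.filter (fun i : Fin K => (i : ℕ) < (k : ℕ))) := by
      ext i
      simp [Nat.lt_succ_iff_lt_or_eq, Fin.ext_iff, or_comm]; rw [le_iff_eq_or_lt, Fin.ext_iff]
    rw [hfilter, Finset.sum_insert (by simp)]
    abel
  -- determinant recursion
  have hdet : ∀ k : Fin K, (W ((k : ℕ) + 1)).det = (W (k : ℕ)).det * (1 + u k) := by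
    intro k
    rw [hWsucc k, aux_det_add_outer (hWpos _) (x k)]
  -- product formula by induction
  have hprod : ∀ n, n ≤ K → (W n).det
      = lam ^ d * ∏ k ∈ Finset.univ.filter (fun k : Fin K => (k : ℕ) < n), (1 + u k) := by
    intro n
    induction n with
    | zero =>
      intro _
      simp only [Nat.not_lt_zero, Finset.filter_false, Finset.prod_empty, mul_one]
      have : W 0 = lam • (1 : Matrix (Fin d) (Fin d) ℝ) := by
        rw [hW]; simp
      rw [this, det_smul, det_one, mul_one, Fintype.card_fin]
    | succ n ih =>
      intro hn
      have hnK : n < K := hn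
      set k : Fin K := ⟨n, hnK⟩ with hk
      have hfilter : Finset.univ.filter (fun i : Fin K => (i : ℕ) < n + 1)
          = insert k (Finset.univ.filter (fun i : Fin K => (i : ℕ) < n)) := by
        ext i
        simp [Nat.lt_succ_iff_lt_or_eq, Fin.ext_iff, hk, or_comm]; omega
      have := hdet k
      simp only [hk] at this
      rw [this, ih (le_of_lt hnK), hfilter, Finset.prod_insert (by simp [hk])]
      ring
  have hfinal : (W K).det = lam ^ d * ∏ k, (1 + u k) := by
    have := hprod K le_rfl
    rwa [Finset.filter_true_of_mem (fun i _ => i.isLt)] at this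
  -- trace bound
  have htrace : (W K).trace ≤ d * lam + K * L ^ 2 := by
    have hxx : ∀ k : Fin K, x k ⬝ᵥ x k ≤ L ^ 2 := by
      intro k
      have hnn : 0 ≤ x k ⬝ᵥ x k := Finset.sum_nonneg fun i _ => mul_self_nonneg _
      calc x k ⬝ᵥ x k = Real.sqrt (x k ⬝ᵥ x k) ^ 2 := (Real.sq_sqrt hnn).symm
        _ ≤ L ^ 2 := by
            have := hx k
            nlinarith [Real.sqrt_nonneg (x k ⬝ᵥ x k)]
    have htr_vv : ∀ k : Fin K, (vecMulVec (x k) (x k)).trace = x k ⬝ᵥ x k := by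
      intro k; simp [trace, vecMulVec, dotProduct, diag]
    have : (W K).trace = d * lam + ∑ k ∈ Finset.univ.filter (fun k : Fin K => (k : ℕ) < K),
        (x k ⬝ᵥ x k) := by
      rw [hW]
      simp only [trace_add, trace_smul, trace_one, trace_sum, Fintype.card_fin]
      rw [Finset.sum_congr rfl fun k _ => htr_vv k]
      simp [mul_comm]
    rw [this, Finset.filter_true_of_mem (fun i _ => i.isLt)]
    have : ∑ k : Fin K, x k ⬝ᵥ x k ≤ ∑ _k : Fin K, L ^ 2 :=
      Finset.sum_le_sum fun k _ => hxx k
    simp only [Finset.sum_const, Finset.card_univ, Fintype.card_fin, nsmul_eq_mul] at this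
    linarith
  -- put everything together
  set c : ℝ := 1 + K * L ^ 2 / (d * lam) with hc
  have hdlam : (0:ℝ) < d * lam := by positivity
  have hc1 : (1:ℝ) ≤ c := by
    rw [hc]
    have : 0 ≤ (K:ℝ) * L ^ 2 / (d * lam) := by positivity
    linarith
  have hc0 : (0:ℝ) < c := lt_of_lt_of_le one_pos hc1
  have h1u : ∀ k : Fin K, (0:ℝ) < 1 + u k := fun k => by have := hu0 k; linarith
  have hprodpos : (0:ℝ) < ∏ k, (1 + u k) := Finset.prod_pos fun k _ => h1u k
  have hprodle : ∏ k, (1 + u k) ≤ c ^ d := by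
    have hWdet : (W K).det ≤ ((W K).trace / d) ^ d := aux_det_le_trace_pow hd (hWpos K).posSemidef
    have htrd : (W K).trace / d ≤ lam * c := by
      rw [div_le_iff₀ (by positivity : (0:ℝ) < (d:ℝ))]
      rw [hc]
      have : lam * (1 + (K:ℝ) * L ^ 2 / (d * lam)) * d = d * lam + K * L ^ 2 := by
        field_simp
      rw [this]
      exact htrace
    have htrpos : 0 ≤ (W K).trace / d := by
      have h := aux_trace_eq_sum_eigenvalues (hWpos K).posSemidef.1
      have h2 : 0 ≤ ∑ i, ((hWpos K).posSemidef.1.eigenvalues i) :=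
        Finset.sum_nonneg fun i _ => (hWpos K).posSemidef.eigenvalues_nonneg i
      exact div_nonneg (h ▸ h2) (Nat.cast_nonneg d)
    have h2 : (W K).det ≤ (lam * c) ^ d := le_trans hWdet (pow_le_pow_left₀ htrpos htrd d)
    have h3 : lam ^ d * ∏ k, (1 + u k) ≤ (lam * c) ^ d := hfinal ▸ h2
    rw [mul_pow] at h3
    have hlamd : (0:ℝ) < lam ^ d := by positivity
    exact le_of_mul_le_mul_left h3 hlamd
  -- final chain
  have hgoal : ∑ k, min 1 (x k ⬝ᵥ (Z k)⁻¹.mulVec (x k)) = ∑ k, min 1 (u k) := by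
    refine Finset.sum_congr rfl fun k _ => ?_
    rw [hZW k]
  rw [hgoal]
  calc ∑ k, min 1 (u k) ≤ ∑ k, 2 * Real.log (1 + u k) :=
        Finset.sum_le_sum fun k _ => aux_min_le_log (hu0 k)
    _ = 2 * Real.log (∏ k, (1 + u k)) := by
        rw [Real.log_prod (fun k _ => (h1u k).ne'), Finset.mul_sum]
    _ ≤ 2 * Real.log (c ^ d) := by
        have := Real.log_le_log hprodpos hprodle
        linarith
    _ = 2 * d * Real.log c := by
        rw [Real.log_pow]; ring
end

section
/- Suppose A, B ∈ ℝ^{d×d} are positive definite matrices with A ⪰ B (i.e., A - B is positive semidefinite). Then for any x ∈ ℝ^d, ‖x‖_{A^{-1}} ≤ ‖x‖_{B^{-1}} · √(det(A)/det(B)). -/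
open Matrix

section Aux

variable {n : Type*} [Fintype n] [DecidableEq n]

omit [DecidableEq n] in
lemma herm_sym_aux {M : Matrix n n ℝ} (hM : M.IsHermitian) (u v : n → ℝ) :
    u ⬝ᵥ M *ᵥ v = v ⬝ᵥ M *ᵥ u := by
  rw [dotProduct_mulVec, ← hM.eq, vecMul_conjTranspose, star_trivial, star_trivial,
    dotProduct_comm, hM.eq]

omit [DecidableEq n] in
lemma cs_aux {M : Matrix n n ℝ} (hM : M.PosSemidef) (u v : n → ℝ) :
    (u ⬝ᵥ M *ᵥ v) ^ 2 ≤ (u ⬝ᵥ M *ᵥ u) * (v ⬝ᵥ M *ᵥ v) := by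
  have key : ∀ t : ℝ, 0 ≤ (v ⬝ᵥ M *ᵥ v) * (t * t) + (2 * (u ⬝ᵥ M *ᵥ v)) * t + u ⬝ᵥ M *ᵥ u := by
    intro t
    have h := hM.dotProduct_mulVec_nonneg (u + t • v)
    simp only [star_trivial, add_dotProduct, dotProduct_add, mulVec_add, mulVec_smul,
      smul_dotProduct, dotProduct_smul, smul_eq_mul] at h
    rw [herm_sym_aux hM.1 v u] at h
    nlinarith [h]
  have := discrim_le_zero key
  rw [discrim] at this
  nlinarith [this]

lemma one_le_det_aux {C : Matrix n n ℝ} (h : (C - 1).PosSemidef) : 1 ≤ C.det := by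
  have hC : C.PosSemidef := by simpa using h.add .one
  have hH := hC.isHermitian
  have heig : ∀ i, 1 ≤ hH.eigenvalues i := by
    intro i
    have hv := hH.eigenvalues_eq i
    set v : n → ℝ := ⇑(hH.eigenvectorBasis i) with hvdef
    have hnorm : ‖hH.eigenvectorBasis i‖ = 1 := hH.eigenvectorBasis.orthonormal.1 i
    have hvv : v ⬝ᵥ v = 1 := by
      have h2 : (inner ℝ (hH.eigenvectorBasis i) (hH.eigenvectorBasis i) : ℝ) = 1 := by
        rw [real_inner_self_eq_norm_sq, hnorm]; norm_num
      rw [EuclideanSpace.inner_eq_star_dotProduct] at h2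
      simpa [dotProduct, mul_comm] using h2
    have hpos := h.dotProduct_mulVec_nonneg v
    simp only [star_trivial, sub_mulVec, one_mulVec, dotProduct_sub, hvv] at hpos
    have h3 : hH.eigenvalues i = v ⬝ᵥ C *ᵥ v := by simpa using hv
    linarith
  rw [hH.det_eq_prod_eigenvalues]
  simp only [RCLike.ofReal_real_eq_id, id]
  calc (1:ℝ) = ∏ _i : n, 1 := by simp
    _ ≤ ∏ i : n, hH.eigenvalues i :=
        Finset.prod_le_prod (fun i _ => zero_le_one) (fun i _ => heig i)

lemma det_mono_aux {A B : Matrix n n ℝ} (hB : B.PosDef)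
    (hAB : (A - B).PosSemidef) : B.det ≤ A.det := by
  set S := (open MatrixOrder in CFC.sqrt B) with hSdef
  have hSpsd : S.PosSemidef := (open MatrixOrder in (CFC.sqrt_nonneg B).posSemidef)
  have hSS : S * S = B := (open MatrixOrder in CFC.sqrt_mul_sqrt_self B hB.posSemidef.nonneg)
  have hdetS : S.det * S.det = B.det := by rw [← det_mul, hSS]
  have hdet0 : S.det ≠ 0 := by
    intro h0; rw [h0, mul_zero] at hdetS; exact hB.det_pos.ne' hdetS.symm
  have hU : IsUnit S.det := isUnit_iff_ne_zero.mpr hdet0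
  have hSinv : S⁻¹ * S = 1 := nonsing_inv_mul S hU
  have hSinv' : S * S⁻¹ = 1 := mul_nonsing_inv S hU
  have hHerm : (S⁻¹)ᴴ = S⁻¹ := by
    rw [conjTranspose_nonsing_inv, hSpsd.isHermitian.eq]
  have key : (S⁻¹ * A * S⁻¹ - 1).PosSemidef := by
    have h1 : S⁻¹ * A * S⁻¹ - 1 = (S⁻¹)ᴴ * (A - B) * S⁻¹ := by
      rw [hHerm, Matrix.mul_sub, Matrix.sub_mul]
      congr 1
      rw [← hSS, ← Matrix.mul_assoc, hSinv, Matrix.one_mul, hSinv']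
    rw [h1]
    exact hAB.conjTranspose_mul_mul_same S⁻¹
  have hdetC := one_le_det_aux key
  rw [det_mul, det_mul, det_nonsing_inv, Ring.inverse_eq_inv'] at hdetC
  have hBpos := hB.det_pos
  calc B.det = B.det * 1 := (mul_one _).symm
    _ ≤ B.det * (S.det⁻¹ * A.det * S.det⁻¹) :=
        mul_le_mul_of_nonneg_left hdetC hBpos.le
    _ = A.det := by field_simp [← hdetS]; rw [← hdetS]; ring

lemma quad_inv_mono_aux {A B : Matrix n n ℝ} (hA : A.PosDef) (hB : B.PosDef)
    (hAB : (A - B).PosSemidef) (x : n → ℝ) :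
    x ⬝ᵥ A⁻¹ *ᵥ x ≤ x ⬝ᵥ B⁻¹ *ᵥ x := by
  set y := A⁻¹ *ᵥ x with hy
  set z := B⁻¹ *ᵥ x with hz
  have hAy : A *ᵥ y = x := by
    rw [hy, mulVec_mulVec, mul_nonsing_inv _ (isUnit_iff_ne_zero.mpr hA.det_pos.ne'), one_mulVec]
  have hBz : B *ᵥ z = x := by
    rw [hz, mulVec_mulVec, mul_nonsing_inv _ (isUnit_iff_ne_zero.mpr hB.det_pos.ne'), one_mulVec]
  set p := x ⬝ᵥ A⁻¹ *ᵥ x with hp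
  set q := x ⬝ᵥ B⁻¹ *ᵥ x with hq
  have hp0 : 0 ≤ p := by simpa using hA.posSemidef.inv.dotProduct_mulVec_nonneg x
  have hq0 : 0 ≤ q := by simpa using hB.posSemidef.inv.dotProduct_mulVec_nonneg x
  have h1 : y ⬝ᵥ B *ᵥ z = p := by rw [hBz, dotProduct_comm]
  have h2 : z ⬝ᵥ B *ᵥ z = q := by rw [hBz, dotProduct_comm]
  have h3 : y ⬝ᵥ B *ᵥ y ≤ p := by
    have hpos := hAB.dotProduct_mulVec_nonneg y
    simp only [star_trivial, sub_mulVec, dotProduct_sub] at hpos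
    have : y ⬝ᵥ A *ᵥ y = p := by rw [hAy, dotProduct_comm]
    linarith
  have h4 : 0 ≤ y ⬝ᵥ B *ᵥ y := by simpa using hB.posSemidef.dotProduct_mulVec_nonneg y
  have hcs := cs_aux hB.posSemidef y z
  rw [h1, h2] at hcs
  rcases eq_or_lt_of_le hp0 with h | h
  · linarith
  · nlinarith
end Aux

theorem stmt_4 (d : ℕ) (A B : Matrix (Fin d) (Fin d) ℝ) (hA : A.PosDef) (hB : B.PosDef)
    (hAB : (A - B).PosSemidef) (x : Fin d → ℝ) :
    Real.sqrt (x ⬝ᵥ A⁻¹.mulVec x) ≤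
      Real.sqrt (x ⬝ᵥ B⁻¹.mulVec x) * Real.sqrt (A.det / B.det) := by
  have h1 : Real.sqrt (x ⬝ᵥ A⁻¹.mulVec x) ≤ Real.sqrt (x ⬝ᵥ B⁻¹.mulVec x) :=
    Real.sqrt_le_sqrt (quad_inv_mono_aux hA hB hAB x)
  have h2 : 1 ≤ Real.sqrt (A.det / B.det) := by
    rw [show (1:ℝ) = Real.sqrt 1 from Real.sqrt_one.symm]
    apply Real.sqrt_le_sqrt
    rw [le_div_iff₀ hB.det_pos, one_mul]
    exact det_mono_aux hB hAB
  calc Real.sqrt (x ⬝ᵥ A⁻¹.mulVec x) ≤ Real.sqrt (x ⬝ᵥ B⁻¹.mulVec x) := h1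
    _ ≤ Real.sqrt (x ⬝ᵥ B⁻¹.mulVec x) * Real.sqrt (A.det / B.det) :=
        le_mul_of_one_le_right (Real.sqrt_nonneg _) h2
end

section
/- Let M, v > 0 be constants, {G_i} a filtration, and {x_i}_{i=1}^n a stochastic process with x_i being G_i-measurable, E[x_i | G_{i-1}] = 0, |x_i| ≤ M almost surely, and ∑_{i=1}^n E[x_i² | G_{i-1}] ≤ v almost surely. Then for any δ ∈ (0,1), with probability at least 1 - δ, ∑_{i=1}^n x_i ≤ √(2 v log(1/δ)) + (2/3) M log(1/δ). -/
open MeasureTheory ProbabilityTheory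

lemma exp_quad_nonpos {x : ℝ} (hx : x ≤ 0) : Real.exp x ≤ 1 + x + x ^ 2 / 2 := by
  have hd : ∀ y : ℝ, HasDerivAt (fun y : ℝ => 1 + y + y ^ 2 / 2 - Real.exp y)
      (1 + y - Real.exp y) y := by
    intro y
    have h1 : HasDerivAt (fun y : ℝ => 1 + y + y ^ 2 / 2)
        (1 + 2 * y ^ 1 / 2) y :=
      (((hasDerivAt_id y).const_add 1).add ((hasDerivAt_pow 2 y).div_const 2)).congr_deriv
        (by ring)
    have := h1.sub (Real.hasDerivAt_exp y)
    refine this.congr_deriv ?_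
    ring
  have hanti : Antitone (fun y : ℝ => 1 + y + y ^ 2 / 2 - Real.exp y) := by
    apply antitone_of_deriv_nonpos (fun y => (hd y).differentiableAt)
    intro y
    rw [(hd y).deriv]
    linarith [Real.add_one_le_exp y]
  have := hanti hx
  simp [Real.exp_zero] at this
  linarith

lemma exp_mul_le {x : ℝ} (hx : 0 ≤ x) :
    Real.exp x * (1 - x / 3) ≤ 1 + 2 / 3 * x + x ^ 2 / 6 := by
  set G : ℝ → ℝ := fun y => 2 + y - Real.exp y * (2 - y) with hG
  have hGd : ∀ y : ℝ, HasDerivAt G (1 - Real.exp y * (1 - y)) y := by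
    intro y
    have h1 : HasDerivAt (fun y : ℝ => Real.exp y * (2 - y))
        (Real.exp y * (2 - y) + Real.exp y * (-1)) y :=
      (Real.hasDerivAt_exp y).mul ((hasDerivAt_id y).const_sub 2)
    have := (((hasDerivAt_id y).const_add 2)).sub h1
    refine this.congr_deriv ?_
    ring
  have hGmono : Monotone G := by
    apply monotone_of_deriv_nonneg (fun y => (hGd y).differentiableAt)
    intro y
    rw [(hGd y).deriv]
    have h1 : 1 - y ≤ Real.exp (-y) := by linarith [Real.add_one_le_exp (-y)]
    have h2 : Real.exp y * (1 - y) ≤ Real.exp y * Real.exp (-y) :=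
      mul_le_mul_of_nonneg_left h1 (Real.exp_pos y).le
    rw [← Real.exp_add] at h2
    simp at h2
    linarith
  have hGnn : ∀ y : ℝ, 0 ≤ y → 0 ≤ G y := by
    intro y hy
    have := hGmono hy
    simpa [hG, Real.exp_zero] using this
  set F : ℝ → ℝ := fun y => 1 + 2 / 3 * y + y ^ 2 / 6 - Real.exp y * (1 - y / 3) with hF
  have hFd : ∀ y : ℝ, HasDerivAt F (G y / 3) y := by
    intro y
    have h1 : HasDerivAt (fun y : ℝ => Real.exp y * (1 - y / 3))
        (Real.exp y * (1 - y / 3) + Real.exp y * (-(1 / 3))) y :=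
      (Real.hasDerivAt_exp y).mul (((hasDerivAt_id y).div_const 3).const_sub 1)
    have h2 : HasDerivAt (fun y : ℝ => 1 + 2 / 3 * y + y ^ 2 / 6)
        (2 / 3 + 2 * y ^ 1 / 6) y :=
      (((hasDerivAt_id y).const_mul (2/3 : ℝ)).const_add 1).add ((hasDerivAt_pow 2 y).div_const 6)
        |>.congr_deriv (by ring)
    have := h2.sub h1
    refine (this.congr_deriv ?_)
    simp only [hG]
    ring
  have hFmono : MonotoneOn F (Set.Ici (0 : ℝ)) := by
    apply monotoneOn_of_deriv_nonneg (convex_Ici 0)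
      (fun y _ => (hFd y).differentiableAt.continuousAt.continuousWithinAt)
      (fun y hy => (hFd y).differentiableAt.differentiableWithinAt)
    intro y hy
    rw [(hFd y).deriv]
    rw [interior_Ici] at hy
    exact div_nonneg (hGnn y (le_of_lt hy)) (by norm_num)
  have := hFmono (Set.self_mem_Ici) (Set.mem_Ici.2 hx) hx
  simp only [hF, Real.exp_zero] at this
  nlinarith [this]

lemma exp_le_quad {c x : ℝ} (hc0 : 0 ≤ c) (hc3 : c < 3) (hx : |x| ≤ c) :
    Real.exp x ≤ 1 + x + x ^ 2 / (2 * (1 - c / 3)) := by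
  have hu : 0 < 1 - c / 3 := by linarith
  rcases le_or_gt x 0 with h | h
  · have h1 := exp_quad_nonpos h
    have h2 : x ^ 2 / 2 ≤ x ^ 2 / (2 * (1 - c / 3)) := by
      apply div_le_div_of_nonneg_left (sq_nonneg x) (by linarith)
      nlinarith
    linarith
  · have hxc : x ≤ c := (abs_le.1 hx).2
    have h1 := exp_mul_le h.le
    have hw : 0 < 1 - x / 3 := by linarith
    have key : (Real.exp x - 1 - x) * (1 - x / 3) ≤ x ^ 2 / 2 := by nlinarith
    have h3 : (Real.exp x - 1 - x) * (1 - c / 3) ≤ x ^ 2 / 2 := by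
      have hnn : 0 ≤ Real.exp x - 1 - x := by linarith [Real.add_one_le_exp x]
      nlinarith
    have : Real.exp x - 1 - x ≤ x ^ 2 / (2 * (1 - c / 3)) := by
      rw [le_div_iff₀ (by linarith)]
      linarith [h3]
    linarith


lemma freedman_core {Ω : Type*} {m : MeasurableSpace Ω} (μ : Measure Ω)
    [IsProbabilityMeasure μ] (𝒢 : Filtration ℕ m) (M : ℝ) (hM : 0 < M)
    (x : ℕ → Ω → ℝ)
    (hmeas : ∀ i, StronglyMeasurable[𝒢 (i + 1)] (x i))
    (hcond : ∀ i, μ[x i | 𝒢 i] =ᵐ[μ] 0)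
    (hbdd : ∀ i, ∀ᵐ ω ∂μ, |x i ω| ≤ M)
    (l g : ℝ) (hl : 0 < l) (hg : 0 < g)
    (hexp : ∀ y : ℝ, |y| ≤ l * M → Real.exp y ≤ 1 + y + g * y ^ 2)
    (n : ℕ) :
    Integrable (fun ω => Real.exp (l * ∑ i ∈ Finset.range n, x i ω
      - g * l ^ 2 * ∑ i ∈ Finset.range n, (μ[fun ω' => (x i ω') ^ 2 | 𝒢 i]) ω)) μ ∧
    ∫ ω, Real.exp (l * ∑ i ∈ Finset.range n, x i ω
      - g * l ^ 2 * ∑ i ∈ Finset.range n, (μ[fun ω' => (x i ω') ^ 2 | 𝒢 i]) ω) ∂μ ≤ 1 := by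
  set σ : ℕ → Ω → ℝ := fun i => μ[fun ω' => (x i ω') ^ 2 | 𝒢 i] with hσdef
  set Y : ℕ → Ω → ℝ := fun k ω => Real.exp (l * ∑ i ∈ Finset.range k, x i ω
      - g * l ^ 2 * ∑ i ∈ Finset.range k, σ i ω) with hYdef
  -- basic measurability / integrability facts
  have hx_sm : ∀ i, StronglyMeasurable (x i) := fun i => (hmeas i).mono (𝒢.le _)
  have hx_int : ∀ i, Integrable (x i) μ := by
    intro i
    refine Integrable.mono' (integrable_const M) (hx_sm i).aestronglyMeasurable ?_
    filter_upwards [hbdd i] with ω hω using by rwa [Real.norm_eq_abs]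
  have hx2_int : ∀ i, Integrable (fun ω => (x i ω) ^ 2) μ := by
    intro i
    refine Integrable.mono' (integrable_const (M ^ 2))
      ((hx_sm i).pow 2).aestronglyMeasurable ?_
    filter_upwards [hbdd i] with ω hω
    rw [Real.norm_eq_abs, abs_pow]
    exact pow_le_pow_left₀ (abs_nonneg _) hω 2
  have hσ_nn : ∀ i, 0 ≤ᵐ[μ] σ i := fun i =>
    condExp_nonneg (ae_of_all μ fun ω => sq_nonneg _)
  have hσ_nn' : ∀ᵐ ω ∂μ, ∀ i, 0 ≤ σ i ω := ae_all_iff.2 hσ_nn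
  have hbdd' : ∀ᵐ ω ∂μ, ∀ i, |x i ω| ≤ M := ae_all_iff.2 hbdd
  have hY_sm : ∀ k, StronglyMeasurable[𝒢 k] (Y k) := by
    intro k
    have hs1 : StronglyMeasurable[𝒢 k] (fun ω => ∑ i ∈ Finset.range k, x i ω) :=
      Finset.stronglyMeasurable_fun_sum _ fun i hi =>
        (hmeas i).mono (𝒢.mono (Finset.mem_range.1 hi))
    have hs2 : StronglyMeasurable[𝒢 k] (fun ω => ∑ i ∈ Finset.range k, σ i ω) :=
      Finset.stronglyMeasurable_fun_sum _ fun i hi =>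
        stronglyMeasurable_condExp.mono (𝒢.mono (Finset.mem_range.1 hi).le)
    exact Real.continuous_exp.comp_stronglyMeasurable
      ((hs1.const_mul l).sub (hs2.const_mul (g * l ^ 2)))
  have hY_bdd : ∀ k, ∀ᵐ ω ∂μ, ‖Y k ω‖ ≤ Real.exp (l * (k * M)) := by
    intro k
    filter_upwards [hbdd', hσ_nn'] with ω h1 h2
    rw [Real.norm_eq_abs, abs_of_pos (Real.exp_pos _)]
    apply Real.exp_le_exp.2
    have hS : ∑ i ∈ Finset.range k, x i ω ≤ k * M := by
      calc ∑ i ∈ Finset.range k, x i ω ≤ ∑ i ∈ Finset.range k, M :=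
            Finset.sum_le_sum fun i _ => (abs_le.1 (h1 i)).2
        _ = k * M := by simp [mul_comm]
    have hSig : 0 ≤ ∑ i ∈ Finset.range k, σ i ω :=
      Finset.sum_nonneg fun i _ => h2 i
    have h3 : l * ∑ i ∈ Finset.range k, x i ω ≤ l * (k * M) :=
      mul_le_mul_of_nonneg_left hS hl.le
    nlinarith [mul_nonneg (mul_nonneg hg.le (sq_nonneg l)) hSig]
  have hY_int : ∀ k, Integrable (Y k) μ := fun k =>
    Integrable.mono' (integrable_const _)
      ((hY_sm k).mono (𝒢.le k)).aestronglyMeasurable (hY_bdd k)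
  -- induction step
  have step : ∀ k, ∫ ω, Y (k + 1) ω ∂μ ≤ ∫ ω, Y k ω ∂μ := by
    intro k
    set f : Ω → ℝ := fun ω => Y k ω * Real.exp (-(g * l ^ 2) * σ k ω) with hfdef
    set Z : Ω → ℝ := fun ω => Real.exp (l * x k ω) with hZdef
    have hYeq : Y (k + 1) = f * Z := by
      funext ω
      simp only [hYdef, hfdef, hZdef, Pi.mul_apply]
      rw [← Real.exp_add, ← Real.exp_add, Finset.sum_range_succ, Finset.sum_range_succ]
      congr 1
      ring
    have hf_sm : StronglyMeasurable[𝒢 k] f :=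
      (hY_sm k).mul (Real.continuous_exp.comp_stronglyMeasurable
        (stronglyMeasurable_condExp.const_mul (-(g * l ^ 2))))
    have hZ_int : Integrable Z μ := by
      refine Integrable.mono' (integrable_const (Real.exp (l * M)))
        (Real.continuous_exp.comp_stronglyMeasurable
          ((hx_sm k).const_mul l)).aestronglyMeasurable ?_
      filter_upwards [hbdd k] with ω hω
      rw [Real.norm_eq_abs, abs_of_pos (Real.exp_pos _)]
      exact Real.exp_le_exp.2 (by
        calc l * x k ω ≤ l * |x k ω| := mul_le_mul_of_nonneg_left (le_abs_self _) hl.le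
          _ ≤ l * M := mul_le_mul_of_nonneg_left hω hl.le)
    have hfZ_int : Integrable (f * Z) μ := hYeq ▸ hY_int (k + 1)
    have hce : μ[f * Z | 𝒢 k] =ᵐ[μ] f * μ[Z | 𝒢 k] :=
      condExp_mul_of_stronglyMeasurable_left hf_sm hfZ_int hZ_int
    -- conditional expectation of Z
    set W : Ω → ℝ := fun ω => 1 + l * x k ω + g * l ^ 2 * (x k ω) ^ 2 with hWdef
    have hZW : Z ≤ᵐ[μ] W := by
      filter_upwards [hbdd k] with ω hω
      have habs : |l * x k ω| ≤ l * M := by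
        rw [abs_mul, abs_of_pos hl]
        exact mul_le_mul_of_nonneg_left hω hl.le
      calc Z ω ≤ 1 + l * x k ω + g * (l * x k ω) ^ 2 := hexp _ habs
        _ = W ω := by simp only [hWdef]; ring
    have hW_int : Integrable W μ := by
      refine ((integrable_const (1 : ℝ)).add ((hx_int k).const_mul l)).add
        ((hx2_int k).const_mul (g * l ^ 2))
    have hWeq : W = (fun _ => (1 : ℝ)) + l • x k + (g * l ^ 2) • (fun ω => (x k ω) ^ 2) := by
      funext ω
      simp [hWdef, smul_eq_mul]
    have hcw : μ[W | 𝒢 k] =ᵐ[μ] fun ω => 1 + g * l ^ 2 * σ k ω := by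
      have hc1 : μ[fun _ : Ω => (1 : ℝ) | 𝒢 k] = fun _ => (1 : ℝ) := condExp_const (𝒢.le k) 1
      have h1 : μ[W | 𝒢 k] =ᵐ[μ] fun ω => (μ[fun ω' => 1 + l * x k ω' | 𝒢 k]) ω
          + (μ[fun ω' => g * l ^ 2 * (x k ω') ^ 2 | 𝒢 k]) ω :=
        condExp_add ((integrable_const (1 : ℝ)).add ((hx_int k).const_mul l))
          ((hx2_int k).const_mul (g * l ^ 2)) _
      have h2 : μ[fun ω' => 1 + l * x k ω' | 𝒢 k] =ᵐ[μ] fun ω =>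
          (μ[fun _ : Ω => (1 : ℝ) | 𝒢 k]) ω + (μ[fun ω' => l * x k ω' | 𝒢 k]) ω :=
        condExp_add (integrable_const (1 : ℝ)) ((hx_int k).const_mul l) _
      have h3 : μ[fun ω' => l * x k ω' | 𝒢 k] =ᵐ[μ] fun ω => l * (μ[x k | 𝒢 k]) ω :=
        condExp_smul (μ := μ) (m := 𝒢 k) l (x k)
      have h4 : μ[fun ω' => g * l ^ 2 * (x k ω') ^ 2 | 𝒢 k] =ᵐ[μ]
          fun ω => g * l ^ 2 * (μ[fun ω' => (x k ω') ^ 2 | 𝒢 k]) ω :=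
        condExp_smul (μ := μ) (m := 𝒢 k) (g * l ^ 2) (fun ω' => (x k ω') ^ 2)
      filter_upwards [h1, h2, h3, h4, hcond k] with ω e1 e2 e3 e4 e5
      simp only [Pi.zero_apply] at e5
      rw [e1]
      rw [e2, e3, e4]
      simp only [hc1, e5, hσdef]
      ring
    have hcZ : μ[Z | 𝒢 k] ≤ᵐ[μ] fun ω => 1 + g * l ^ 2 * σ k ω :=
      (condExp_mono hZ_int hW_int hZW).trans hcw.le
    -- combine
    have hkey : μ[Y (k + 1) | 𝒢 k] ≤ᵐ[μ] Y k := by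
      rw [hYeq]
      filter_upwards [hce, hcZ, hσ_nn k] with ω e1 e2 e3
      rw [e1, Pi.mul_apply]
      set y := g * l ^ 2 * σ k ω with hy
      have hy0 : 0 ≤ y := mul_nonneg (mul_nonneg hg.le (sq_nonneg l)) e3
      have hf0 : 0 ≤ f ω := mul_nonneg (Real.exp_pos _).le (Real.exp_pos _).le
      have h7 : f ω * (μ[Z | 𝒢 k]) ω ≤ f ω * (1 + y) := mul_le_mul_of_nonneg_left e2 hf0
      have h8 : f ω * (1 + y) ≤ Y k ω := by
        have h9 : Real.exp (-y) * (1 + y) ≤ 1 := by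
          have := Real.add_one_le_exp y
          have h10 : Real.exp (-y) * (1 + y) ≤ Real.exp (-y) * Real.exp y :=
            mul_le_mul_of_nonneg_left (by linarith) (Real.exp_pos _).le
          rwa [← Real.exp_add, neg_add_cancel, Real.exp_zero] at h10
        have : f ω * (1 + y) = Y k ω * (Real.exp (-(g * l ^ 2) * σ k ω) * (1 + y)) := by
          simp only [hfdef]; ring
        rw [this]
        have hyy : -(g * l ^ 2) * σ k ω = -y := by rw [hy]; ring
        rw [hyy]
        nlinarith [Real.exp_pos (-y), (Real.exp_pos (l * ∑ i ∈ Finset.range k, x i ω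
          - g * l ^ 2 * ∑ i ∈ Finset.range k, σ i ω)).le, h9]
      linarith
    calc ∫ ω, Y (k + 1) ω ∂μ = ∫ ω, (μ[Y (k + 1) | 𝒢 k]) ω ∂μ :=
          (integral_condExp (𝒢.le k)).symm
      _ ≤ ∫ ω, Y k ω ∂μ := integral_mono_ae integrable_condExp (hY_int k) hkey
  have main : ∀ k, ∫ ω, Y k ω ∂μ ≤ 1 := by
    intro k
    induction k with
    | zero =>
      simp only [hYdef, Finset.range_zero, Finset.sum_empty, mul_zero, sub_zero, Real.exp_zero]
      simp
    | succ k ih => exact (step k).trans ih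
  exact ⟨hY_int n, main n⟩


set_option maxHeartbeats 2000000 in
theorem stmt_5 {Ω : Type*} {m : MeasurableSpace Ω} (μ : Measure Ω)
    [IsProbabilityMeasure μ] (𝒢 : Filtration ℕ m) (n : ℕ) (M v : ℝ)
    (hM : 0 < M) (hv : 0 < v) (x : ℕ → Ω → ℝ)
    (hmeas : ∀ i, StronglyMeasurable[𝒢 (i + 1)] (x i))
    (hcond : ∀ i, μ[x i | 𝒢 i] =ᵐ[μ] 0)
    (hbdd : ∀ i, ∀ᵐ ω ∂μ, |x i ω| ≤ M)
    (hvar : ∀ᵐ ω ∂μ, ∑ i ∈ Finset.range n, (μ[fun ω' => (x i ω') ^ 2 | 𝒢 i]) ω ≤ v)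
    (δ : ℝ) (hδ : δ ∈ Set.Ioo (0 : ℝ) 1) :
    ENNReal.ofReal (1 - δ) ≤
      μ {ω | ∑ i ∈ Finset.range n, x i ω ≤
        Real.sqrt (2 * v * Real.log (1 / δ)) + 2 / 3 * M * Real.log (1 / δ)} := by
  obtain ⟨hδ0, hδ1⟩ := hδ
  set s := Real.log (1 / δ) with hs
  have hs0 : 0 < s := Real.log_pos (by rw [lt_div_iff₀ hδ0]; linarith)
  have hlogδ : Real.log δ = -s := by rw [hs, one_div, Real.log_inv, neg_neg]
  clear_value s
  set t := Real.sqrt (2 * v * s) + 2 / 3 * M * s with ht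
  have hsq : Real.sqrt (2 * v * s) ^ 2 = 2 * v * s := Real.sq_sqrt (by positivity)
  have hsqnn : (0:ℝ) ≤ Real.sqrt (2 * v * s) := Real.sqrt_nonneg _
  have ht0 : 0 < t := by
    have : 0 < 2 / 3 * M * s := by positivity
    rw [ht]; linarith
  clear_value t
  set D := v + M * t / 3 with hD
  have hMt : 0 < M * t := mul_pos hM ht0
  have hD0 : 0 < D := by rw [hD]; nlinarith [hMt, hv]
  have h2Ds : 2 * D * s ≤ t ^ 2 := by
    rw [hD, ht]
    nlinarith [hsq, hsqnn, hs0, hM, hv, mul_nonneg (mul_nonneg hM.le hs0.le) hsqnn]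
  clear_value D
  set l := t / D with hl
  have hl0 : 0 < l := div_pos ht0 hD0
  clear_value l
  set c := l * M with hc
  have hc0 : 0 < c := mul_pos hl0 hM
  have hc3 : c < 3 := by
    rw [hc, hl, div_mul_eq_mul_div, div_lt_iff₀ hD0, hD]
    nlinarith [hMt, hv, mul_comm t M]
  clear_value c
  have hu0 : 0 < 1 - c / 3 := by linarith
  set g := 1 / (2 * (1 - c / 3)) with hg
  have hg0 : 0 < g := by rw [hg]; positivity
  clear_value g
  have hexp : ∀ y : ℝ, |y| ≤ l * M → Real.exp y ≤ 1 + y + g * y ^ 2 := by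
    intro y hy
    calc Real.exp y ≤ 1 + y + y ^ 2 / (2 * (1 - c / 3)) :=
          exp_le_quad hc0.le hc3 (by rwa [← hc] at hy)
      _ = 1 + y + g * y ^ 2 := by rw [hg]; ring
  obtain ⟨hY_int, hY_le⟩ := freedman_core μ 𝒢 M hM x hmeas hcond hbdd l g hl0 hg0 hexp n
  set σ : ℕ → Ω → ℝ := fun i => μ[fun ω' => (x i ω') ^ 2 | 𝒢 i] with hσdef
  set Y : Ω → ℝ := fun ω => Real.exp (l * ∑ i ∈ Finset.range n, x i ω
      - g * l ^ 2 * ∑ i ∈ Finset.range n, σ i ω) with hYdef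
  clear_value σ Y
  -- the exponent bound
  have h13 : 1 - c / 3 = v / D := by
    rw [hc, hl, hD]
    field_simp
    ring
  have hvne : v ≠ 0 := hv.ne'
  have hDne : D ≠ 0 := hD0.ne'
  have hgD : g = D / (2 * v) := by
    rw [hg, h13]
    field_simp
  have hkey : g * l ^ 2 * v - l * t = -(t ^ 2 / (2 * D)) := by
    rw [hgD, hl]
    field_simp
    ring
  set r := l * t - g * l ^ 2 * v with hr
  clear_value r
  have hrs : s ≤ r := by
    have : s ≤ t ^ 2 / (2 * D) := by
      rw [le_div_iff₀ (by linarith)]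
      linarith
    have hr2 : r = t ^ 2 / (2 * D) := by rw [hr]; linarith [hkey]
    linarith
  -- Markov
  have hY_nn : 0 ≤ᵐ[μ] Y := by
    rw [hYdef]
    exact ae_of_all _ fun ω => (Real.exp_pos _).le
  have hmark := mul_meas_ge_le_integral_of_nonneg hY_nn hY_int (Real.exp r)
  set B := {ω | Real.exp r ≤ Y ω} with hB
  have hBtoReal : (μ B).toReal ≤ δ := by
    have hrr : Real.exp r * Real.exp (-r) = 1 := by
      rw [← Real.exp_add]; simp
    have h1 : (μ B).toReal ≤ Real.exp (-r) := by
      rw [measureReal_def] at hmark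
      nlinarith [Real.exp_pos r, Real.exp_pos (-r), ENNReal.toReal_nonneg (a := μ B), hY_le, hmark]
    have h2 : Real.exp (-r) ≤ δ := by
      rw [← Real.exp_log hδ0]
      apply Real.exp_le_exp.2
      rw [hlogδ]
      linarith
    linarith
  have hBδ : μ B ≤ ENNReal.ofReal δ :=
    (ENNReal.le_ofReal_iff_toReal_le (measure_ne_top μ B) hδ0.le).2 hBtoReal
  -- inclusion
  set N := {ω | ¬ (∑ i ∈ Finset.range n, σ i ω ≤ v)} with hN
  have hN0 : μ N = 0 := by
    rw [hN]
    simp only [hσdef]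
    exact ae_iff.1 hvar
  have hincl : {ω | ¬ (∑ i ∈ Finset.range n, x i ω ≤ t)} ⊆ B ∪ N := by
    intro ω hω
    by_cases hvv : ∑ i ∈ Finset.range n, σ i ω ≤ v
    · left
      simp only [hB, Set.mem_setOf_eq]
      rw [hYdef]
      apply Real.exp_le_exp.2
      simp only [Set.mem_setOf_eq, not_le] at hω
      have e1 : l * t ≤ l * ∑ i ∈ Finset.range n, x i ω :=
        mul_le_mul_of_nonneg_left hω.le hl0.le
      have e2 : g * l ^ 2 * ∑ i ∈ Finset.range n, σ i ω ≤ g * l ^ 2 * v :=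
        mul_le_mul_of_nonneg_left hvv (by positivity)
      rw [hr]
      linarith
    · right; exact hvv
  have hSm : Measurable fun ω => ∑ i ∈ Finset.range n, x i ω :=
    Finset.measurable_sum _ fun i _ => ((hmeas i).mono (𝒢.le _)).measurable
  have hTm : MeasurableSet {ω | ∑ i ∈ Finset.range n, x i ω ≤ t} :=
    measurableSet_le hSm measurable_const
  have hcompl_le : μ {ω | ∑ i ∈ Finset.range n, x i ω ≤ t}ᶜ ≤ ENNReal.ofReal δ := by
    have : {ω | ∑ i ∈ Finset.range n, x i ω ≤ t}ᶜ = {ω | ¬ (∑ i ∈ Finset.range n, x i ω ≤ t)} := rfl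
    rw [this]
    calc μ {ω | ¬ (∑ i ∈ Finset.range n, x i ω ≤ t)} ≤ μ (B ∪ N) := measure_mono hincl
      _ ≤ μ B + μ N := measure_union_le _ _
      _ = μ B := by rw [hN0, add_zero]
      _ ≤ ENNReal.ofReal δ := hBδ
  have hadd : μ {ω | ∑ i ∈ Finset.range n, x i ω ≤ t}
      + μ {ω | ∑ i ∈ Finset.range n, x i ω ≤ t}ᶜ = 1 := by
    rw [measure_add_measure_compl hTm, measure_univ]
  have hδsum : ENNReal.ofReal (1 - δ) + ENNReal.ofReal δ = 1 := by
    rw [← ENNReal.ofReal_add (by linarith) hδ0.le]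
    norm_num
  have hfin : ENNReal.ofReal (1 - δ) + ENNReal.ofReal δ
      ≤ μ {ω | ∑ i ∈ Finset.range n, x i ω ≤ t} + ENNReal.ofReal δ := by
    rw [hδsum, ← hadd]
    exact add_le_add_right hcompl_le _
  exact (ENNReal.add_le_add_iff_right ENNReal.ofReal_ne_top).1 hfin
end
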